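/- (Optimality of the constant 0.75) For every 0 < r < 3/4, λ₁(r) = (1 − 1/r) − √(1/r² − 1/r) < −1; consequently, there exists an initial point u⁰ ∈ ℝ² such that the sequence defined by u^{k+1} = P(r)·uᵏ (i.e., uᵏ = P(r)ᵏ·u⁰) is unbounded. Hence the CP-PPA applied to min{0·x : x = 0, x ∈ ℝ} with s = 1 is divergent for every 0 < r < 3/4. -/

import Mathlib

open Matrix

/-- The iteration matrix of CP-PPA with `s = 1` applied to `min{0·x : x = 0, x ∈ ℝ}`. -/
noncomputable def Pmat (r : ℝ) : Matrix (Fin 2) (Fin 2) ℝ :=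
  !![1, 1 / r; -1, 1 - 2 / r]

noncomputable def lam1 (r : ℝ) : ℝ := (1 - 1 / r) - Real.sqrt (1 / r ^ 2 - 1 / r)

/-- Optimality of the constant 0.75: for every `0 < r < 3/4`, `λ₁(r) < −1` and the
CP-PPA iteration `u^{k+1} = P(r) uᵏ` is divergent from some initial point. -/
theorem stmt_17 (r : ℝ) (hr0 : 0 < r) (hr : r < 3 / 4) :
    lam1 r < -1 ∧
    ∃ u0 : Fin 2 → ℝ, ¬ ∃ C : ℝ, ∀ k : ℕ, ‖((Pmat r) ^ k).mulVec u0‖ ≤ C := by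
  have hrne : r ≠ 0 := hr0.ne'
  have ht : (4:ℝ)/3 < 1/r := by rw [lt_div_iff₀ hr0]; linarith
  have htr : (1:ℝ)/r = r⁻¹ := one_div r
  have hD : 0 ≤ 1 / r ^ 2 - 1 / r := by
    have h1 : 1/r^2 = (1/r)^2 := by ring
    nlinarith
  have hs2 : (Real.sqrt (1 / r ^ 2 - 1 / r))^2 = 1 / r ^ 2 - 1 / r := Real.sq_sqrt hD
  have hlam : lam1 r < -1 := by
    have hsq : (2 - 1/r) < Real.sqrt (1 / r ^ 2 - 1 / r) := by
      rcases le_or_gt (2 - 1/r) 0 with h | h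
      · refine h.trans_lt (Real.sqrt_pos.2 ?_)
        have h1 : 1/r^2 = (1/r)^2 := by ring
        nlinarith
      · rw [show (2 - 1/r) = Real.sqrt ((2-1/r)^2) from (Real.sqrt_sq h.le).symm]
        apply Real.sqrt_lt_sqrt (by positivity)
        have h1 : 1/r^2 = (1/r)^2 := by ring
        nlinarith
    unfold lam1; linarith
  refine ⟨hlam, ?_⟩
  set l := lam1 r with hl
  have hchar : l ^ 2 = (2 - 2/r) * l - (1 - 1/r) := by
    have : l = (1 - 1/r) - Real.sqrt (1/r^2 - 1/r) := rfl
    rw [this]; linear_combination hs2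
  set u0 : Fin 2 → ℝ := ![1, r * (l - 1)] with hu0
  have hstep : (Pmat r).mulVec u0 = l • u0 := by
    funext i
    fin_cases i <;>
      simp [Pmat, hu0, mulVec, dotProduct, Fin.sum_univ_two]
    · field_simp
      ring
    · have hchar' : l ^ 2 * r = (2 * r - 2) * l - (r - 1) := by
        field_simp at hchar
        linarith [hchar]
      field_simp
      linear_combination (-1) * hchar'
  have hiter : ∀ k : ℕ, ((Pmat r) ^ k).mulVec u0 = l ^ k • u0 := by
    intro k
    induction k with
    | zero => simp
    | succ n ih =>
      rw [pow_succ', ← Matrix.mulVec_mulVec, ih, Matrix.mulVec_smul, hstep,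
        smul_smul, pow_succ', mul_comm]
  refine ⟨u0, ?_⟩
  rintro ⟨C, hC⟩
  have hgt : 1 < |l| := by rw [abs_of_neg (by linarith)]; linarith
  obtain ⟨k, hk⟩ := pow_unbounded_of_one_lt C hgt
  have hnorm : |l| ^ k ≤ ‖((Pmat r) ^ k).mulVec u0‖ := by
    rw [hiter k, norm_smul]
    have h1 : (1:ℝ) ≤ ‖u0‖ := by
      have := norm_le_pi_norm u0 0
      simpa [hu0] using this
    have : ‖l ^ k‖ = |l| ^ k := by rw [norm_pow]; rfl
    nlinarith [pow_pos (lt_trans one_pos hgt) k]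
  exact absurd (hC k) (by push_neg; linarith)
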